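/- Let μ, μ' be partitioned orders of [n] with φ(μ) equal to the circular shift by î of φ(μ'), both of length p. Then for every automata network f : X → X, the map π = f|(W_0,...,W_{î−1}) (updating the first î blocks of φ(μ)) restricts to a bijection from the limit set Ω of f|φ(μ) onto the limit set Ω' of f|φ(μ'), and it conjugates the restricted dynamics: f|φ(μ') ∘ π = π ∘ f|φ(μ) on Ω. -/

import Mathlib

/-- A partitioned order of `[n]`: a set of pairwise disjoint nonempty lists
of distinct elements of `[n]` whose union is `[n]`. -/
structure PartitionedOrder (n : ℕ) where
  oblocks : Finset (List (Fin n))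
  nonempty : ∀ S ∈ oblocks, S ≠ []
  nodup : ∀ S ∈ oblocks, S.Nodup
  disjoint : ∀ S ∈ oblocks, ∀ T ∈ oblocks, S ≠ T → ∀ x, x ∈ S → x ∉ T
  cover : ∀ x : Fin n, ∃ S ∈ oblocks, x ∈ S

namespace PartitionedOrder

variable {n : ℕ}

/-- The block `W_ℓ = { S_k[ℓ mod n_k] : k }` of the sequential rewriting. -/
def phiBlock (μ : PartitionedOrder n) (ℓ : ℕ) : Finset (Fin n) :=
  μ.oblocks.attach.image (fun S =>
    S.1.get ⟨ℓ % S.1.length,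
      Nat.mod_lt _ (List.length_pos_iff.mpr (μ.nonempty S.1 S.2))⟩)

/-- The period `p` of a partitioned order: the lcm of its o-block lengths. -/
def period (μ : PartitionedOrder n) : ℕ := μ.oblocks.lcm List.length

/-- The sequential rewriting `φ(μ) = (W_0, …, W_{p-1})`. -/
def phi (μ : PartitionedOrder n) : List (Finset (Fin n)) :=
  (List.range μ.period).map μ.phiBlock

end PartitionedOrder

/-- An ordered partition of `[n]` (block-sequential update mode): a sequence of
nonempty pairwise disjoint subsets of `[n]` whose union is `[n]`. -/
def IsOrderedPartition {n : ℕ} (L : List (Finset (Fin n))) : Prop :=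
  (∀ W ∈ L, W.Nonempty) ∧ L.Pairwise Disjoint ∧ ∀ x : Fin n, ∃ W ∈ L, x ∈ W

section AutomataNetwork

variable {n : ℕ} {X : Fin n → Type}

/-- Update of the automata of the block `W`:
`f|W(x)_i = f_i(x)` if `i ∈ W` and `x_i` otherwise. -/
def updBlock (f : (∀ i, X i) → ∀ i, X i) (W : Finset (Fin n))
    (x : ∀ i, X i) : ∀ i, X i :=
  fun i => if i ∈ W then f x i else x i

/-- Update along a sequence of blocks:
`f|(W_0,…,W_{p-1}) = f|W_{p-1} ∘ ⋯ ∘ f|W_0`. -/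
def updSeq (f : (∀ i, X i) → ∀ i, X i) (L : List (Finset (Fin n))) :
    (∀ i, X i) → ∀ i, X i :=
  L.foldl (fun g W => updBlock f W ∘ g) id

lemma updSeq_foldl (f : (∀ i, X i) → ∀ i, X i)
    (L : List (Finset (Fin n))) (g : (∀ i, X i) → ∀ i, X i) :
    L.foldl (fun g W => updBlock f W ∘ g) g = updSeq f L ∘ g := by
  induction L generalizing g with
  | nil => rfl
  | cons W L ih =>
    rw [List.foldl_cons, ih (updBlock f W ∘ g)]
    have h2 : updSeq f (W :: L) = updSeq f L ∘ updBlock f W := by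
      rw [updSeq, List.foldl_cons]
      exact ih (updBlock f W ∘ id)
    rw [h2, Function.comp_assoc]

lemma updSeq_append (f : (∀ i, X i) → ∀ i, X i)
    (L₁ L₂ : List (Finset (Fin n))) :
    updSeq f (L₁ ++ L₂) = updSeq f L₂ ∘ updSeq f L₁ := by
  rw [updSeq, List.foldl_append, updSeq_foldl, ← updSeq]

end AutomataNetwork

/-- The limit set `Ω_g = ⋂_t g^t(X)` of a dynamical system `g`. -/
def limitSet {α : Type*} (g : α → α) : Set α := ⋂ t : ℕ, Set.range (g^[t])

section Aux

variable {α : Type*}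

lemma conj_iter (A B : α → α) (t : ℕ) (x : α) :
    A ((B ∘ A)^[t] x) = (A ∘ B)^[t] (A x) := by
  induction t generalizing x with
  | zero => rfl
  | succ t ih =>
    rw [Function.iterate_succ_apply, Function.iterate_succ_apply]
    exact ih (B (A x))

lemma exists_idem_pow [Finite α] (g : α → α) :
    ∃ k, 0 < k ∧ g^[k + k] = g^[k] := by
  obtain ⟨a, b, hab, h⟩ := Finite.exists_ne_map_eq_of_infinite (fun t : ℕ => g^[t])
  wlog hlt : a < b generalizing a b
  · exact this b a hab.symm h.symm (by omega)
  set p := b - a with hp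
  have hper : ∀ t, a ≤ t → g^[t + p] = g^[t] := by
    intro t ht
    obtain ⟨s, rfl⟩ := Nat.exists_eq_add_of_le ht
    have : a + s + p = s + b := by omega
    rw [this, Nat.add_comm a s, Function.iterate_add, Function.iterate_add, h]
  have hperm : ∀ m t, a ≤ t → g^[t + m * p] = g^[t] := by
    intro m
    induction m with
    | zero => simp
    | succ m ih =>
      intro t ht
      have : t + (m + 1) * p = (t + p) + m * p := by ring
      rw [this, ih _ (by omega), hper _ ht]
  refine ⟨(a + 1) * p, Nat.mul_pos (Nat.succ_pos a) (Nat.sub_pos_of_lt hlt), ?_⟩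
  have := hperm (a + 1) ((a + 1) * p) (by nlinarith [Nat.sub_pos_of_lt hlt])
  simpa using this

lemma limitSet_eq_range [Finite α] (g : α → α) :
    ∃ k, 0 < k ∧ g^[k + k] = g^[k] ∧ limitSet g = Set.range g^[k] := by
  obtain ⟨k, hk, hidem⟩ := exists_idem_pow g
  refine ⟨k, hk, hidem, ?_⟩
  have hmul : ∀ m, 0 < m → g^[m * k] = g^[k] := by
    intro m hm
    induction m with
    | zero => omega
    | succ m ih =>
      rcases Nat.eq_zero_or_pos m with rfl | hm'
      · simp
      · have : (m + 1) * k = k + m * k := by ring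
        rw [this, Function.iterate_add, ih hm', ← Function.iterate_add, hidem]
  refine Set.Subset.antisymm ?_ ?_
  · intro x hx
    exact Set.mem_iInter.mp hx k
  · intro x hx
    refine Set.mem_iInter.mpr fun t => ?_
    obtain ⟨z, rfl⟩ := hx
    rcases Nat.eq_zero_or_pos t with rfl | ht
    · exact ⟨g^[k] z, rfl⟩
    have hle : t ≤ t * k := Nat.le_mul_of_pos_right t hk
    obtain ⟨s, hs⟩ := Nat.exists_eq_add_of_le hle
    refine ⟨g^[s] z, ?_⟩
    rw [← Function.iterate_add_apply, ← hs, hmul t ht]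

lemma main_aux [Finite α] (A B : α → α) :
    Set.BijOn A (limitSet (B ∘ A)) (limitSet (A ∘ B)) ∧
    Set.EqOn ((A ∘ B) ∘ A) (A ∘ (B ∘ A)) (limitSet (B ∘ A)) := by
  set g := B ∘ A with hg
  set g' := A ∘ B with hg'
  obtain ⟨k, hk, hidem, hΩ⟩ := limitSet_eq_range g
  have hfix : ∀ x ∈ limitSet g, g^[k] x = x := by
    intro x hx
    rw [hΩ] at hx
    obtain ⟨z, rfl⟩ := hx
    rw [← Function.iterate_add_apply, hidem]
  refine ⟨⟨?_, ?_, ?_⟩, fun x _ => rfl⟩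
  · -- MapsTo
    intro x hx
    refine Set.mem_iInter.mpr fun t => ?_
    obtain ⟨z, rfl⟩ := Set.mem_iInter.mp hx t
    exact ⟨A z, (conj_iter A B t z).symm⟩
  · -- InjOn
    intro x hx y hy hAxy
    have hgxy : g x = g y := by simp [hg, Function.comp, hAxy]
    have : g^[k] x = g^[k] y := by
      rcases Nat.exists_eq_add_of_lt hk with ⟨m, hm⟩
      rw [Nat.zero_add] at hm
      rw [hm, Function.iterate_add_apply, Function.iterate_add_apply]
      simp [Function.iterate_one, hgxy]
    rwa [hfix x hx, hfix y hy] at this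
  · -- SurjOn
    intro y hy
    obtain ⟨z, hz⟩ := Set.mem_iInter.mp hy (k + 1)
    have : y = A (g^[k] (B z)) := by
      rw [conj_iter A B k (B z), ← hz, Function.iterate_succ_apply]
      rfl
    refine ⟨g^[k] (B z), ?_, this.symm⟩
    rw [hΩ]
    exact ⟨B z, rfl⟩

end Aux

/-- if `φ(μ')` is the circular shift of `φ(μ)` by `ksh`, then
`π = f|(W_0,…,W_{ksh−1})` restricts to a bijection between the limit sets and
conjugates the two dynamics on the limit set of `f|φ(μ)`. -/
theorem shift_conjugates_limit_dynamics {n : ℕ} {X : Fin n → Type}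
    [∀ i, Fintype (X i)] (μ μ' : PartitionedOrder n) (ksh : ℕ)
    (hk : ksh < μ.phi.length) (hshift : μ'.phi = μ.phi.rotate ksh)
    (f : (∀ i, X i) → ∀ i, X i) :
    Set.BijOn (updSeq f (μ.phi.take ksh))
      (limitSet (updSeq f μ.phi)) (limitSet (updSeq f μ'.phi)) ∧
    Set.EqOn (updSeq f μ'.phi ∘ updSeq f (μ.phi.take ksh))
      (updSeq f (μ.phi.take ksh) ∘ updSeq f μ.phi)
      (limitSet (updSeq f μ.phi)) := by
  have hle : ksh ≤ μ.phi.length := hk.le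
  set A := updSeq f (μ.phi.take ksh) with hA
  set B := updSeq f (μ.phi.drop ksh) with hB
  have hgl : updSeq f μ.phi = B ∘ A := by
    conv_lhs => rw [← List.take_append_drop ksh μ.phi]
    rw [updSeq_append]
  have hgl' : updSeq f μ'.phi = A ∘ B := by
    rw [hshift, List.rotate_eq_drop_append_take hle, updSeq_append]
  have : Finite (∀ i, X i) := Finite.of_fintype _
  rw [hgl, hgl']
  exact main_aux A B
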